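/- There exist absolute constants C, c such that if n∆ > C log s, then the first frequency ω₁ = argmax_{τ∈[0,1)} |f(τ)^* y| selected by (un-preconditioned) OMP on y satisfies ω₁ ∈ S(τ_{T(1)}) for some index T(1) ∈ [s], and moreover |x_{T(1)}| ≥ (1 − (c log s)/(n∆)) · max_i |x_i|. -/

import Mathlib

open scoped BigOperators

noncomputable section

/-- The (un-preconditioned) atom `f(τ) ∈ ℂ^{2n+1}` with entries `e^{2πiℓτ}`, `ℓ = -n,…,n`. -/
def atomD (n : ℕ) (τ : ℝ) : EuclideanSpace ℂ (Fin (2 * n + 1)) :=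
  WithLp.toLp 2 (fun ℓ => Complex.exp
    (2 * Real.pi * Complex.I * ((((ℓ : ℕ) : ℤ) - (n : ℤ) : ℤ) : ℂ) * (τ : ℂ)))

namespace OMPAux
open Complex Finset Real

noncomputable def Kc (n : ℕ) (t : ℝ) : ℂ :=
  ∑ ℓ : Fin (2*n+1), Complex.exp (2 * Real.pi * Complex.I * ((((ℓ:ℕ):ℤ) - (n:ℤ) : ℤ) : ℂ) * (t:ℂ))

lemma inner_atom (n : ℕ) (a b : ℝ) :
    (inner ℂ (atomD n a) (atomD n b) : ℂ) = Kc n (b - a) := by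
  simp only [atomD, Kc, PiLp.inner_apply, PiLp.toLp_apply, RCLike.inner_apply]
  refine Finset.sum_congr rfl fun ℓ _ => ?_
  rw [← Complex.exp_conj, ← Complex.exp_add]
  congr 1
  simp only [map_mul, Complex.conj_I, Complex.conj_ofReal, map_intCast, map_ofNat]
  push_cast
  ring

lemma kc_abs_le (n : ℕ) (t : ℝ) : ‖Kc n t‖ ≤ 2*n+1 := by
  calc ‖Kc n t‖ ≤ ∑ ℓ : Fin (2*n+1), ‖Complex.exp
        (2 * Real.pi * Complex.I * ((((ℓ:ℕ):ℤ) - (n:ℤ) : ℤ) : ℂ) * (t:ℂ))‖ := by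
        exact norm_sum_le _ _
    _ = ∑ _ℓ : Fin (2*n+1), 1 := by
        refine Finset.sum_congr rfl fun ℓ _ => ?_
        rw [Complex.norm_exp]
        norm_num [Complex.mul_re, Complex.mul_im]
    _ = 2*n+1 := by simp

lemma kc_zero (n : ℕ) : Kc n 0 = 2*n+1 := by
  simp [Kc]

lemma kc_period (n : ℕ) (t : ℝ) (k : ℤ) : Kc n (t + k) = Kc n t := by
  unfold Kc
  refine Finset.sum_congr rfl fun ℓ _ => ?_
  have : (2 * (Real.pi:ℂ) * Complex.I * ((((ℓ:ℕ):ℤ) - (n:ℤ) : ℤ) : ℂ) * ((t:ℝ) + (k:ℤ) : ℝ))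
      = 2 * (Real.pi:ℂ) * Complex.I * ((((ℓ:ℕ):ℤ) - (n:ℤ) : ℤ) : ℂ) * (t:ℂ)
        + (((((ℓ:ℕ):ℤ) - (n:ℤ)) * k : ℤ) : ℂ) * (2 * Real.pi * Complex.I) := by
    push_cast; ring
  rw [this, Complex.exp_add, Complex.exp_int_mul_two_pi_mul_I, mul_one]

lemma kc_abs_le_inv_sin (n : ℕ) (t : ℝ) (h : Real.sin (Real.pi * t) ≠ 0) :
    ‖Kc n t‖ ≤ 1 / |Real.sin (Real.pi * t)| := by
  set q : ℂ := Complex.exp (2 * Real.pi * Complex.I * t) with hq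
  have habsq : ‖q‖ = 1 := by
    rw [hq, Complex.norm_exp]
    norm_num [Complex.mul_re, Complex.mul_im]
  have hterm : ∀ ℓ : Fin (2*n+1),
      Complex.exp (2 * Real.pi * Complex.I * ((((ℓ:ℕ):ℤ) - (n:ℤ) : ℤ) : ℂ) * (t:ℂ))
      = Complex.exp (2 * Real.pi * Complex.I * (-(n:ℤ) : ℂ) * t) * q ^ (ℓ:ℕ) := by
    intro ℓ
    rw [hq, ← Complex.exp_nat_mul, ← Complex.exp_add]
    congr 1
    push_cast; ring
  have hsum : Kc n t = Complex.exp (2 * Real.pi * Complex.I * (-(n:ℤ) : ℂ) * t)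
      * ∑ ℓ ∈ Finset.range (2*n+1), q ^ ℓ := by
    unfold Kc
    rw [Finset.mul_sum, ← Fin.sum_univ_eq_sum_range]
    exact Finset.sum_congr rfl fun ℓ _ => hterm ℓ
  have hqne : q ≠ 1 := by
    intro hq1
    rw [hq, Complex.exp_eq_one_iff] at hq1
    obtain ⟨k, hk⟩ := hq1
    have h2pi : (2 * (Real.pi:ℂ) * Complex.I) ≠ 0 := by
      have hpi : (Real.pi:ℂ) ≠ 0 := by exact_mod_cast Real.pi_ne_zero
      exact mul_ne_zero (mul_ne_zero two_ne_zero hpi) Complex.I_ne_zero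
    have hk' : (2*(Real.pi:ℂ)*Complex.I) * (t:ℂ) = (2*(Real.pi:ℂ)*Complex.I) * (k:ℂ) := by
      linear_combination hk
    have ht : (t:ℂ) = (k:ℂ) := mul_left_cancel₀ h2pi hk'
    have htr : t = (k:ℝ) := by exact_mod_cast ht
    apply h
    rw [htr, mul_comm]
    exact Real.sin_int_mul_pi k
  have habsq1 : ‖q - 1‖ = 2 * |Real.sin (Real.pi * t)| := by
    have hrepr : q = (Real.cos (2*Real.pi*t) : ℝ) + (Real.sin (2*Real.pi*t) : ℝ) * Complex.I := by
      rw [hq, show (2 * (Real.pi:ℂ) * Complex.I * t) = ((2*Real.pi*t : ℝ):ℂ) * Complex.I by push_cast; ring,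
        Complex.exp_mul_I]
      push_cast
      rfl
    have : q - 1 = ((Real.cos (2*Real.pi*t) - 1 : ℝ):ℂ) + (Real.sin (2*Real.pi*t) : ℝ) * Complex.I := by
      rw [hrepr]; push_cast; ring
    rw [this, Complex.norm_add_mul_I]
    have hc2 : Real.cos (2*Real.pi*t) = 1 - 2 * Real.sin (Real.pi*t)^2 := by
      have := Real.cos_two_mul (Real.pi * t)
      have h2 := Real.sin_sq_add_cos_sq (Real.pi * t)
      rw [show 2*Real.pi*t = 2*(Real.pi*t) by ring]
      nlinarith
    have : (Real.cos (2*Real.pi*t) - 1)^2 + Real.sin (2*Real.pi*t)^2 = (2 * Real.sin (Real.pi*t)^2)^2 + Real.sin (2*Real.pi*t)^2 := by rw [hc2]; ring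
    rw [this]
    have hs2 : Real.sin (2*Real.pi*t) = 2 * Real.sin (Real.pi*t) * Real.cos (Real.pi*t) := by
      rw [show 2*Real.pi*t = 2*(Real.pi*t) by ring, Real.sin_two_mul]
    rw [hs2]
    have h2 := Real.sin_sq_add_cos_sq (Real.pi * t)
    rw [show (2 * Real.sin (Real.pi*t)^2)^2 + (2*Real.sin (Real.pi*t)*Real.cos (Real.pi*t))^2
        = (2 * |Real.sin (Real.pi*t)|)^2 by nlinarith [_root_.sq_abs (Real.sin (Real.pi*t))]]
    exact Real.sqrt_sq (by positivity)
  have hgeom : ∑ ℓ ∈ Finset.range (2*n+1), q ^ ℓ = (q ^ (2*n+1) - 1) / (q - 1) :=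
    geom_sum_eq hqne _
  have habs : ‖Kc n t‖ = ‖q ^ (2*n+1) - 1‖ / ‖q - 1‖ := by
    rw [hsum, hgeom, norm_mul, norm_div, Complex.norm_exp]
    norm_num [Complex.mul_re, Complex.mul_im]
  rw [habs, habsq1]
  have hnum : ‖q ^ (2*n+1) - 1‖ ≤ 2 := by
    calc ‖q ^ (2*n+1) - 1‖ ≤ ‖q ^ (2*n+1)‖ + 1 := by
          simpa using norm_sub_le (q ^ (2*n+1)) 1
      _ ≤ 2 := by rw [norm_pow, habsq]; norm_num
  have hsinpos : 0 < |Real.sin (Real.pi * t)| := abs_pos.mpr h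
  rw [div_le_div_iff₀ (by positivity) (by positivity)]
  nlinarith

lemma harmonic_mono : Monotone harmonic := by
  intro m n h
  unfold harmonic
  exact Finset.sum_le_sum_of_subset_of_nonneg (Finset.range_subset_range.mpr h)
    (fun i _ _ => by positivity)

lemma sum_inv_le_harmonic {ι : Type*} [DecidableEq ι] :
    ∀ (m : ℕ) (F : Finset ι) (ψ : ι → ℕ), F.card = m → (∀ i ∈ F, 1 ≤ ψ i) →
    Set.InjOn ψ F → ∑ i ∈ F, ((ψ i : ℝ))⁻¹ ≤ (harmonic m : ℝ) := by
  intro m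
  induction m with
  | zero => intro F ψ hc _ _; rw [Finset.card_eq_zero.mp hc]; simp
  | succ m ih =>
    intro F ψ hc h1 hinj
    obtain ⟨i0, hi0F, hmax⟩ := F.exists_max_image ψ
      (by rw [← Finset.card_pos, hc]; exact Nat.succ_pos m)
    have himage : (F.image ψ).card = m + 1 := by
      rw [Finset.card_image_of_injOn hinj, hc]
    have hψbig : m + 1 ≤ ψ i0 := by
      have hsub : F.image ψ ⊆ Finset.Icc 1 (ψ i0) := by
        intro k hk
        obtain ⟨i, hiF, rfl⟩ := Finset.mem_image.mp hk
        exact Finset.mem_Icc.mpr ⟨h1 i hiF, hmax i hiF⟩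
      have := Finset.card_le_card hsub
      rw [himage, Nat.card_Icc] at this
      omega
    have hrest := ih (F.erase i0) ψ
      (by rw [Finset.card_erase_of_mem hi0F, hc]; rfl)
      (fun i hi => h1 i (Finset.mem_of_mem_erase hi))
      (hinj.mono (fun i hi => Finset.mem_of_mem_erase hi))
    rw [← Finset.sum_erase_add F _ hi0F]
    have hcast : (harmonic (m+1) : ℝ) = (harmonic m : ℝ) + ((m+1 : ℕ) : ℝ)⁻¹ := by
      rw [harmonic_succ]; push_cast; ring
    rw [hcast]
    refine add_le_add hrest ?_
    have hpos : (0:ℝ) < ((m+1 : ℕ):ℝ) := by positivity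
    rw [inv_le_inv₀ (by exact_mod_cast Nat.lt_of_lt_of_le (Nat.succ_pos m) hψbig) hpos]
    exact_mod_cast hψbig

lemma sum_inv_side {s : ℕ} (F : Finset (Fin s)) (v : Fin s → ℝ) (Δ : ℝ) (hΔ : 0 < Δ)
    (hlb : ∀ i ∈ F, Δ/2 ≤ v i)
    (hsep : ∀ i ∈ F, ∀ j ∈ F, i ≠ j → Δ ≤ |v i - v j|) :
    ∑ i ∈ F, 1/(2 * v i) ≤ 1/Δ + (harmonic F.card : ℝ)/(2*Δ) := by
  classical
  set φ : Fin s → ℕ := fun i => (⌊v i / Δ⌋).toNat with hφ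
  have hvpos : ∀ i ∈ F, 0 < v i := fun i hi => lt_of_lt_of_le (by positivity) (hlb i hi)
  have hφle : ∀ i ∈ F, (φ i : ℝ) * Δ ≤ v i := by
    intro i hi
    have h0 : (0:ℤ) ≤ ⌊v i / Δ⌋ := Int.floor_nonneg.mpr (div_nonneg (hvpos i hi).le hΔ.le)
    have : (φ i : ℝ) = ((⌊v i / Δ⌋ : ℤ) : ℝ) := by
      have h' := Int.toNat_of_nonneg h0
      rw [hφ]
      exact_mod_cast congrArg (fun z : ℤ => (z : ℝ)) h'
    rw [this]
    calc ((⌊v i / Δ⌋ : ℤ) : ℝ) * Δ ≤ (v i / Δ) * Δ := by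
          exact mul_le_mul_of_nonneg_right (Int.floor_le _) hΔ.le
      _ = v i := by field_simp
  have hinj : Set.InjOn φ F := by
    intro i hi j hj hij
    by_contra hne
    have hsep' := hsep i hi j hj hne
    have h0i : (0:ℤ) ≤ ⌊v i / Δ⌋ := Int.floor_nonneg.mpr (div_nonneg (hvpos i hi).le hΔ.le)
    have h0j : (0:ℤ) ≤ ⌊v j / Δ⌋ := Int.floor_nonneg.mpr (div_nonneg (hvpos j hj).le hΔ.le)
    have hfl : ⌊v i / Δ⌋ = ⌊v j / Δ⌋ := by
      have := congrArg (fun k : ℕ => (k : ℤ)) hij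
      simpa [hφ, Int.toNat_of_nonneg h0i, Int.toNat_of_nonneg h0j] using this
    -- |v i / Δ - v j / Δ| ≥ 1 but both in same floor interval
    have h1 : 1 ≤ |v i / Δ - v j / Δ| := by
      rw [div_sub_div_same, abs_div, abs_of_pos hΔ, le_div_iff₀ hΔ]
      simpa using hsep'
    have hi2 := Int.lt_floor_add_one (v i / Δ)
    have hj2 := Int.lt_floor_add_one (v j / Δ)
    have hfi := Int.floor_le (v i / Δ)
    have hfj := Int.floor_le (v j / Δ)
    rw [hfl] at hi2 hfi
    have hlt : |v i / Δ - v j / Δ| < 1 := by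
      rw [abs_sub_lt_iff]
      constructor <;> linarith
    linarith
  -- split F by whether φ i = 0
  have hsplit := Finset.sum_filter_add_sum_filter_not F (fun i => φ i = 0)
    (fun i => 1/(2 * v i))
  set F0 := F.filter (fun i => φ i = 0) with hF0
  set F1 := F.filter (fun i => ¬ φ i = 0) with hF1
  have hF0card : F0.card ≤ 1 := by
    rw [Finset.card_le_one]
    intro a ha b hb
    have haF := Finset.mem_filter.mp ha
    have hbF := Finset.mem_filter.mp hb
    exact hinj haF.1 hbF.1 (by rw [haF.2, hbF.2])
  have hsum0 : ∑ i ∈ F0, 1/(2 * v i) ≤ 1/Δ := by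
    calc ∑ i ∈ F0, 1/(2 * v i) ≤ ∑ _i ∈ F0, 1/Δ := by
          refine Finset.sum_le_sum fun i hi => ?_
          have hiF := (Finset.mem_filter.mp hi).1
          rw [div_le_div_iff₀ (by have := hvpos i hiF; linarith) hΔ]
          have := hlb i hiF; linarith
      _ = (F0.card : ℝ) * (1/Δ) := by rw [Finset.sum_const, nsmul_eq_mul]
      _ ≤ 1 * (1/Δ) := by
          apply mul_le_mul_of_nonneg_right _ (by positivity)
          exact_mod_cast hF0card
      _ = 1/Δ := one_mul _
  have hsum1 : ∑ i ∈ F1, 1/(2 * v i) ≤ (harmonic F.card : ℝ)/(2*Δ) := by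
    have hstep : ∑ i ∈ F1, 1/(2 * v i) ≤ ∑ i ∈ F1, ((φ i : ℝ))⁻¹ * (1/(2*Δ)) := by
      refine Finset.sum_le_sum fun i hi => ?_
      have hiF := (Finset.mem_filter.mp hi).1
      have hφ1 : 1 ≤ φ i := Nat.one_le_iff_ne_zero.mpr (Finset.mem_filter.mp hi).2
      have hφpos : (0:ℝ) < (φ i : ℝ) := by exact_mod_cast hφ1
      have hv := hvpos i hiF
      have hkey : (φ i:ℝ) * (2*Δ) ≤ 2 * v i := by nlinarith [hφle i hiF]
      calc 1/(2 * v i) ≤ 1/((φ i:ℝ)*(2*Δ)) := one_div_le_one_div_of_le (by positivity) hkey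
        _ = ((φ i : ℝ))⁻¹ * (1/(2*Δ)) := by rw [one_div, mul_inv]; ring
    refine hstep.trans ?_
    rw [← Finset.sum_mul]
    have hh := sum_inv_le_harmonic F1.card F1 φ rfl
      (fun i hi => Nat.one_le_iff_ne_zero.mpr (Finset.mem_filter.mp hi).2)
      (hinj.mono (fun i hi => (Finset.mem_filter.mp hi).1))
    have hmono : (harmonic F1.card : ℝ) ≤ (harmonic F.card : ℝ) := by
      exact_mod_cast harmonic_mono (Finset.card_le_card (Finset.filter_subset _ F))
    calc (∑ i ∈ F1, ((φ i : ℝ))⁻¹) * (1/(2*Δ)) ≤ (harmonic F.card : ℝ) * (1/(2*Δ)) := by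
          apply mul_le_mul_of_nonneg_right (hh.trans hmono) (by positivity)
      _ = (harmonic F.card : ℝ)/(2*Δ) := by ring
  calc ∑ i ∈ F, 1/(2 * v i) = ∑ i ∈ F0, 1/(2 * v i) + ∑ i ∈ F1, 1/(2 * v i) := hsplit.symm
    _ ≤ 1/Δ + (harmonic F.card : ℝ)/(2*Δ) := add_le_add hsum0 hsum1

lemma abs_sin_pi_abs (u : ℝ) (h : |u| ≤ 1/2) :
    |Real.sin (Real.pi * u)| = Real.sin (Real.pi * |u|) := by
  have hker : |Real.sin (Real.pi * u)| = |Real.sin (Real.pi * |u|)| := by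
    rcases abs_cases u with ⟨h1, _⟩ | ⟨h1, _⟩
    · rw [h1]
    · rw [h1, mul_neg, Real.sin_neg, abs_neg]
  rw [hker, _root_.abs_of_nonneg]
  apply Real.sin_nonneg_of_nonneg_of_le_pi (by positivity)
  nlinarith [Real.pi_pos, abs_nonneg u]

lemma two_abs_le_abs_sin (u : ℝ) (h : |u| ≤ 1/2) :
    2 * |u| ≤ |Real.sin (Real.pi * u)| := by
  rw [abs_sin_pi_abs u h]
  have hh := Real.mul_le_sin (x := Real.pi * |u|) (by positivity)
    (by nlinarith [Real.pi_pos, abs_nonneg u])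
  calc 2 * |u| = 2 / Real.pi * (Real.pi * |u|) := by
        field_simp
      _ ≤ Real.sin (Real.pi * |u|) := hh


lemma kc_le_inv_u (n : ℕ) (t : ℝ) (h : t - round t ≠ 0) :
    ‖Kc n t‖ ≤ 1 / (2 * |t - round t|) := by
  set u := t - round t with hu
  have hu2 : |u| ≤ 1/2 := abs_sub_round t
  have hKc : Kc n t = Kc n u := by
    have ht : t = u + ((round t : ℤ) : ℝ) := by rw [hu]; ring
    conv_lhs => rw [ht]
    exact kc_period n u (round t)
  have habs : 2 * |u| ≤ |Real.sin (Real.pi * u)| := two_abs_le_abs_sin u hu2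
  have hupos : 0 < |u| := abs_pos.mpr h
  have hsne : Real.sin (Real.pi * u) ≠ 0 := by
    intro h0
    rw [h0, abs_zero] at habs
    linarith
  calc ‖Kc n t‖ = ‖Kc n u‖ := by rw [hKc]
    _ ≤ 1 / |Real.sin (Real.pi * u)| := kc_abs_le_inv_sin n u hsne
    _ ≤ 1 / (2 * |u|) := one_div_le_one_div_of_le (by positivity) habs

lemma esum_bound {s : ℕ} (hs : 0 < s) (j : Fin s) (u : Fin s → ℝ) (Δ : ℝ) (hΔ : 0 < Δ)
    (hlb : ∀ i, i ≠ j → Δ/2 ≤ |u i|)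
    (husep : ∀ i i' : Fin s, i ≠ i' → Δ ≤ |u i - u i'|) :
    ∑ i ∈ Finset.univ.erase j, 1/(2*|u i|) ≤ 6 * Real.log s / Δ := by
  classical
  rcases eq_or_lt_of_le (Nat.one_le_iff_ne_zero.mpr hs.ne') with hs1 | hs2
  · -- s = 1
    have : (Finset.univ.erase j : Finset (Fin s)) = ∅ := by
      rw [← Finset.card_eq_zero, Finset.card_erase_of_mem (Finset.mem_univ j),
        Finset.card_univ, Fintype.card_fin, ← hs1]
    rw [this, Finset.sum_empty, ← hs1]
    norm_num
  -- now 2 ≤ s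
  set F := (Finset.univ.erase j : Finset (Fin s)) with hF
  set P := F.filter (fun i => 0 ≤ u i) with hP
  set N := F.filter (fun i => ¬ 0 ≤ u i) with hN
  have hsplit := Finset.sum_filter_add_sum_filter_not F (fun i => 0 ≤ u i)
    (fun i => 1/(2*|u i|))
  have hPle : ∑ i ∈ P, 1/(2*|u i|) ≤ 1/Δ + (harmonic s : ℝ)/(2*Δ) := by
    have h1 := sum_inv_side P (fun i => |u i|) Δ hΔ
      (fun i hi => hlb i (Finset.ne_of_mem_erase ((Finset.mem_filter.mp hi).1)))
      (fun i hi i' hi' hne => by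
        have hui : 0 ≤ u i := (Finset.mem_filter.mp hi).2
        have hui' : 0 ≤ u i' := (Finset.mem_filter.mp hi').2
        rw [_root_.abs_of_nonneg hui, _root_.abs_of_nonneg hui']
        exact husep i i' hne)
    refine h1.trans ?_
    have : (harmonic P.card : ℝ) ≤ (harmonic s : ℝ) := by
      exact_mod_cast harmonic_mono (le_trans (Finset.card_le_card (Finset.filter_subset _ _))
        (by rw [hF]; exact le_trans (Finset.card_erase_le) (by simp)))
    have h2Δ : (0:ℝ) < 2*Δ := by linarith
    gcongr
  have hNle : ∑ i ∈ N, 1/(2*|u i|) ≤ 1/Δ + (harmonic s : ℝ)/(2*Δ) := by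
    have h1 := sum_inv_side N (fun i => |u i|) Δ hΔ
      (fun i hi => hlb i (Finset.ne_of_mem_erase ((Finset.mem_filter.mp hi).1)))
      (fun i hi i' hi' hne => by
        have hui : u i < 0 := lt_of_not_ge (Finset.mem_filter.mp hi).2
        have hui' : u i' < 0 := lt_of_not_ge (Finset.mem_filter.mp hi').2
        rw [_root_.abs_of_neg hui, _root_.abs_of_neg hui']
        rw [show -u i - -u i' = -(u i - u i') by ring, _root_.abs_neg]
        exact husep i i' hne)
    refine h1.trans ?_
    have : (harmonic N.card : ℝ) ≤ (harmonic s : ℝ) := by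
      exact_mod_cast harmonic_mono (le_trans (Finset.card_le_card (Finset.filter_subset _ _))
        (by rw [hF]; exact le_trans (Finset.card_erase_le) (by simp)))
    have h2Δ : (0:ℝ) < 2*Δ := by linarith
    gcongr
  have hharm : (harmonic s : ℝ) ≤ 1 + Real.log s := harmonic_le_one_add_log s
  have hlog2 : Real.log 2 ≤ Real.log s := by
    apply Real.log_le_log (by norm_num)
    exact_mod_cast hs2
  have hlog2' : (0.6931471803 : ℝ) < Real.log 2 := Real.log_two_gt_d9
  calc ∑ i ∈ F, 1/(2*|u i|) = ∑ i ∈ P, 1/(2*|u i|) + ∑ i ∈ N, 1/(2*|u i|) := hsplit.symm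
    _ ≤ 2/Δ + (harmonic s : ℝ)/Δ := by
        have := add_le_add hPle hNle
        calc _ ≤ 1/Δ + (harmonic s:ℝ)/(2*Δ) + (1/Δ + (harmonic s:ℝ)/(2*Δ)) := this
          _ = 2/Δ + (harmonic s : ℝ)/Δ := by field_simp; ring
    _ ≤ (3 + Real.log s)/Δ := by
        rw [← add_div, div_le_div_iff₀ hΔ hΔ]
        nlinarith [hharm]
    _ ≤ 6 * Real.log s / Δ := by
        rw [div_le_div_iff₀ hΔ hΔ]
        nlinarith [hlog2, hlog2']
  
lemma abs_kc_cast (n : ℕ) : ‖2*(n:ℂ)+1‖ = 2*(n:ℝ)+1 := by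
  have h : (2*(n:ℂ)+1) = ((2*(n:ℝ)+1 : ℝ) : ℂ) := by push_cast; ring
  rw [h, Complex.norm_real, Real.norm_eq_abs, _root_.abs_of_pos (by positivity)]

end OMPAux

set_option maxHeartbeats 1000000 in
open OMPAux in
/-- **First-step analysis of un-preconditioned OMP.**
There are absolute constants `C, c` such that if `n∆ > C log s` (with `∆` the wrap-around
separation of the distinct frequencies `τ_1,…,τ_s ⊆ [0,1)`), then any maximizer `ω₁` of
`τ ↦ |f(τ)^* y|` over `[0,1)`, where `y = Σ_i x_i f(τ_i)`, lies within `1/(2n+4)` (mod 1) of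
some true frequency `τ_{T(1)}`, and moreover `|x_{T(1)}| ≥ (1 − c·log s/(n∆))·max_i |x_i|`. -/
theorem omp_first_step_unpreconditioned :
    ∃ C c : ℝ, 0 < C ∧ 0 < c ∧
      ∀ (n s : ℕ), 0 < n → 0 < s →
      ∀ (τ : Fin s → ℝ), (∀ i, τ i ∈ Set.Ico (0 : ℝ) 1) →
      ∀ (Δ : ℝ), 0 < Δ → (∀ i j, i ≠ j → ∀ k : ℤ, Δ ≤ |τ i - τ j + (k : ℝ)|) →
      ∀ (x : Fin s → ℂ), (∀ i, x i ≠ 0) →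
      C * Real.log s < (n : ℝ) * Δ →
      ∀ ω₁ ∈ Set.Ico (0 : ℝ) 1,
        (∀ τ' ∈ Set.Ico (0 : ℝ) 1,
          ‖(inner ℂ (atomD n τ') (∑ i, x i • atomD n (τ i)) : ℂ)‖ ≤
          ‖(inner ℂ (atomD n ω₁) (∑ i, x i • atomD n (τ i)) : ℂ)‖) →
        ∃ j : Fin s,
          (∃ k : ℤ, |ω₁ - τ j + (k : ℝ)| ≤ 1 / (2 * (n : ℝ) + 4)) ∧
          (1 - c * Real.log s / ((n : ℝ) * Δ)) * (⨆ i, ‖x i‖) ≤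
            ‖x j‖ := by
  classical
  refine ⟨144, 6, by norm_num, by norm_num, ?_⟩
  intro n s hn hs τ hτ Δ hΔ hsep x hx hC ω₁ hω₁ hmax
  have hn1 : (1:ℝ) ≤ (n:ℝ) := by exact_mod_cast hn
  have hinner : ∀ ρ : ℝ, (inner ℂ (atomD n ρ) (∑ i, x i • atomD n (τ i)) : ℂ)
      = ∑ i, x i * Kc n (τ i - ρ) := by
    intro ρ
    rw [inner_sum]
    exact Finset.sum_congr rfl fun i _ => by rw [inner_smul_right, inner_atom]
  obtain ⟨i0, -, hi0⟩ := Finset.exists_max_image Finset.univ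
    (fun i => ‖x i‖) ⟨⟨0, hs⟩, Finset.mem_univ _⟩
  set B := ‖x i0‖ with hB
  have hBpos : 0 < B := norm_pos_iff.mpr (hx i0)
  have hBle : ∀ i, ‖x i‖ ≤ B := fun i => hi0 i (Finset.mem_univ i)
  haveI : Nonempty (Fin s) := ⟨⟨0, hs⟩⟩
  have hsup : (⨆ i, ‖x i‖) = B := by
    apply le_antisymm
    · exact ciSup_le hBle
    · exact le_ciSup (f := fun i => ‖x i‖)
        ⟨B, by rintro v ⟨i, rfl⟩; exact hBle i⟩ i0
  set u : Fin s → ℝ := fun i => (τ i - ω₁) - round (τ i - ω₁) with hu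
  have hu2 : ∀ i, |u i| ≤ 1/2 := fun i => abs_sub_round _
  have husep : ∀ i i' : Fin s, i ≠ i' → Δ ≤ |u i - u i'| := by
    intro i i' hne
    have h := hsep i i' hne (round (τ i' - ω₁) - round (τ i - ω₁))
    have heq : u i - u i' = τ i - τ i' + ((round (τ i' - ω₁) - round (τ i - ω₁) : ℤ) : ℝ) := by
      rw [hu]; push_cast; ring
    rw [heq]; exact h
  obtain ⟨j, -, hjmin⟩ := Finset.exists_min_image Finset.univ
    (fun i => |u i|) ⟨⟨0, hs⟩, Finset.mem_univ _⟩
  have hjmin' : ∀ i, |u j| ≤ |u i| := fun i => hjmin i (Finset.mem_univ i)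
  have hlbj : ∀ i, i ≠ j → Δ/2 ≤ |u i| := by
    intro i hne
    have h1 := husep i j hne
    have h2 : |u i - u j| ≤ |u i| + |u j| := abs_sub _ _
    have h3 := hjmin' i
    linarith
  set E := 6 * Real.log s / Δ with hE
  have hlogs : 0 ≤ Real.log s := Real.log_natCast_nonneg s
  have hEnn : 0 ≤ E := by positivity
  have hE2 : ∑ i ∈ Finset.univ.erase j, 1/(2*|u i|) ≤ E :=
    esum_bound hs j u Δ hΔ hlbj husep
  have hEn : E < (n:ℝ)/24 := by
    rw [hE, div_lt_div_iff₀ hΔ (by norm_num : (0:ℝ) < 24)]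
    nlinarith [hC]
  -- lower bound at τ i0
  set w : Fin s → ℝ := fun i => (τ i - τ i0) - round (τ i - τ i0) with hw
  have hwsep : ∀ i i' : Fin s, i ≠ i' → Δ ≤ |w i - w i'| := by
    intro i i' hne
    have h := hsep i i' hne (round (τ i' - τ i0) - round (τ i - τ i0))
    have heq : w i - w i' = τ i - τ i' + ((round (τ i' - τ i0) - round (τ i - τ i0) : ℤ) : ℝ) := by
      rw [hw]; push_cast; ring
    rw [heq]; exact h
  have hwlb : ∀ i, i ≠ i0 → Δ/2 ≤ |w i| := by
    intro i hne
    have h := hsep i i0 hne (-round (τ i - τ i0))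
    have heq : w i = τ i - τ i0 + ((-round (τ i - τ i0) : ℤ) : ℝ) := by
      rw [hw]; push_cast; ring
    rw [heq]; linarith
  have hE1 : ∑ i ∈ Finset.univ.erase i0, 1/(2*|w i|) ≤ E :=
    esum_bound hs i0 w Δ hΔ hwlb hwsep
  -- the two tail estimates
  have htail : ∀ (c0 : Fin s) (v : Fin s → ℝ) (ρ : ℝ),
      (∀ i, v i = (τ i - ρ) - round (τ i - ρ)) →
      (∀ i, i ≠ c0 → Δ/2 ≤ |v i|) →
      (∑ i ∈ Finset.univ.erase c0, 1/(2*|v i|) ≤ E) →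
      ‖∑ i ∈ Finset.univ.erase c0, x i * Kc n (τ i - ρ)‖ ≤ B * E := by
    intro c0 v ρ hv hvlb hvE
    calc ‖∑ i ∈ Finset.univ.erase c0, x i * Kc n (τ i - ρ)‖
        ≤ ∑ i ∈ Finset.univ.erase c0, ‖x i * Kc n (τ i - ρ)‖ :=
          norm_sum_le _ _
      _ ≤ ∑ i ∈ Finset.univ.erase c0, B * (1/(2*|v i|)) := by
          refine Finset.sum_le_sum fun i hi => ?_
          have hne : i ≠ c0 := Finset.ne_of_mem_erase hi
          have hvpos : 0 < |v i| := lt_of_lt_of_le (by positivity) (hvlb i hne)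
          have hvne : (τ i - ρ) - round (τ i - ρ) ≠ 0 := by
            rw [← hv i]; exact fun h0 => by simp [h0] at hvpos
          have hk := kc_le_inv_u n (τ i - ρ) hvne
          rw [← hv i] at hk
          rw [norm_mul]
          exact mul_le_mul (hBle i) hk (by positivity) hBpos.le
      _ = B * ∑ i ∈ Finset.univ.erase c0, 1/(2*|v i|) := by rw [Finset.mul_sum]
      _ ≤ B * E := mul_le_mul_of_nonneg_left hvE hBpos.le
  have hlow : ((2*(n:ℝ)+1) - E) * B ≤
      ‖(inner ℂ (atomD n (τ i0)) (∑ i, x i • atomD n (τ i)) : ℂ)‖ := by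
    rw [hinner]
    rw [← Finset.add_sum_erase _ _ (Finset.mem_univ i0)]
    set T := x i0 * Kc n (τ i0 - τ i0) with hT
    set S := ∑ i ∈ Finset.univ.erase i0, x i * Kc n (τ i - τ i0) with hS
    have habsT : ‖T‖ = B * (2*(n:ℝ)+1) := by
      rw [hT, norm_mul, sub_self, kc_zero, abs_kc_cast]
    have habsS : ‖S‖ ≤ B * E := htail i0 w (τ i0) (fun i => rfl) hwlb hE1
    have htri : ‖T‖ ≤ ‖T + S‖ + ‖S‖ := by
      have h := norm_add_le (T + S) (-S)
      rw [norm_neg] at h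
      simpa using h
    nlinarith [htri, habsS, habsT]
  have hmax' := hmax (τ i0) (hτ i0)
  set G := ‖(inner ℂ (atomD n ω₁) (∑ i, x i • atomD n (τ i)) : ℂ)‖ with hG
  have hlowG : ((2*(n:ℝ)+1) - E) * B ≤ G := le_trans hlow hmax'
  set Kj := ‖Kc n (τ j - ω₁)‖ with hKj
  have hupG : G ≤ ‖x j‖ * Kj + B * E := by
    rw [hG, hinner]
    rw [← Finset.add_sum_erase _ _ (Finset.mem_univ j)]
    have h1 : ‖x j * Kc n (τ j - ω₁)‖ = ‖x j‖ * Kj := norm_mul _ _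
    have h2 := htail j u ω₁ (fun i => rfl) hlbj hE2
    calc ‖x j * Kc n (τ j - ω₁) + ∑ i ∈ Finset.univ.erase j, x i * Kc n (τ i - ω₁)‖
        ≤ ‖x j * Kc n (τ j - ω₁)‖
          + ‖∑ i ∈ Finset.univ.erase j, x i * Kc n (τ i - ω₁)‖ :=
          norm_add_le _ _
      _ ≤ ‖x j‖ * Kj + B * E := by rw [h1]; exact add_le_add_right h2 _
  have hxjB : ‖x j‖ ≤ B := hBle j
  have hKjnn : 0 ≤ Kj := norm_nonneg _
  have hKjle : Kj ≤ 2*(n:ℝ)+1 := by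
    have := kc_abs_le n (τ j - ω₁); rw [hKj]; exact_mod_cast this
  have hchain : ((2*(n:ℝ)+1) - E) * B ≤ ‖x j‖ * Kj + B * E := le_trans hlowG hupG
  -- (i) Kj is large
  have hKjlow : 2*(n:ℝ)+1 - 2*E ≤ Kj := by
    have h1 : ‖x j‖ * Kj ≤ B * Kj := mul_le_mul_of_nonneg_right hxjB hKjnn
    nlinarith [hchain, h1, hBpos]
  -- (ii) amplitude
  have hamp : (1 - 6 * Real.log s / ((n:ℝ) * Δ)) * B ≤ ‖x j‖ := by
    have h1 : ‖x j‖ * Kj ≤ ‖x j‖ * (2*(n:ℝ)+1) :=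
      mul_le_mul_of_nonneg_left hKjle (norm_nonneg _)
    have h2 : ((2*(n:ℝ)+1) - 2*E) * B ≤ ‖x j‖ * (2*(n:ℝ)+1) := by
      nlinarith [hchain, h1]
    have hnΔ : (0:ℝ) < (n:ℝ)*Δ := by positivity
    have key : 2*E ≤ 6*Real.log s/((n:ℝ)*Δ) * (2*(n:ℝ)+1) := by
      have l1 : 2*E = 12*Real.log s/Δ := by rw [hE]; ring
      rw [l1, div_mul_eq_mul_div, div_le_div_iff₀ hΔ hnΔ]
      nlinarith [mul_nonneg hlogs hΔ.le]
    have h5 : (1 - 6*Real.log s/((n:ℝ)*Δ))*B*(2*(n:ℝ)+1) ≤ ‖x j‖*(2*(n:ℝ)+1) := by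
      nlinarith [mul_le_mul_of_nonneg_right key hBpos.le, h2]
    exact le_of_mul_le_mul_right h5 (by positivity)
  refine ⟨j, ?_, by rw [hsup]; exact hamp⟩
  -- closeness
  refine ⟨round (τ j - ω₁), ?_⟩
  have heq : ω₁ - τ j + ((round (τ j - ω₁) : ℤ) : ℝ) = -(u j) := by
    rw [hu]; push_cast; ring
  rw [heq, abs_neg]
  -- show |u j| ≤ 1/(2n+4)
  by_cases hz : u j = 0
  · rw [hz, abs_zero]; positivity
  · have hdpos : 0 < |u j| := abs_pos.mpr hz
    have hd2 : |u j| ≤ 1/2 := hu2 j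
    have hKc : Kc n (τ j - ω₁) = Kc n (u j) := by
      have ht : τ j - ω₁ = u j + ((round (τ j - ω₁) : ℤ) : ℝ) := by rw [hu]; push_cast; ring
      rw [ht, kc_period]
    have hsne : Real.sin (Real.pi * u j) ≠ 0 := by
      have h2a := two_abs_le_abs_sin (u j) hd2
      intro h0; rw [h0, abs_zero] at h2a; linarith
    have hspos : 0 < Real.sin (Real.pi * |u j|) := by
      rw [← abs_sin_pi_abs (u j) hd2]; exact abs_pos.mpr hsne
    have hKs : Kj ≤ 1 / Real.sin (Real.pi * |u j|) := by
      rw [hKj, hKc, ← abs_sin_pi_abs (u j) hd2]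
      exact kc_abs_le_inv_sin n (u j) hsne
    set M : ℝ := 2*(n:ℝ)+1 - (n:ℝ)/12 with hMdef
    have hM : M ≤ Kj := by rw [hMdef]; nlinarith [hKjlow, hEn]
    have hMpos : 0 < M := by rw [hMdef]; nlinarith
    have hsinub : Real.sin (Real.pi * |u j|) ≤ 1 / M := by
      have hchain2 : M ≤ 1/Real.sin (Real.pi * |u j|) := le_trans hM hKs
      rw [le_div_iff₀ hspos] at hchain2
      rw [le_div_iff₀ hMpos]
      linarith
    set δ : ℝ := 1/(2*(n:ℝ)+4) with hδ
    have hδpos : 0 < δ := by positivity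
    have hπ3 : 3 < Real.pi := Real.pi_gt_three
    have hπ315 : Real.pi < 3.15 := Real.pi_lt_d2
    have hδub : δ ≤ 1/6 := by
      rw [hδ, div_le_div_iff₀ (by positivity) (by norm_num)]
      nlinarith [hn1]
    have hXlb : 3/(2*(n:ℝ)+4) ≤ Real.pi * δ := by
      rw [hδ, mul_one_div, div_le_div_iff₀ (by positivity) (by positivity)]
      nlinarith [hn1]
    have hMbig : 2*(n:ℝ)+4 ≤ 2.793*M := by
      rw [hMdef]; nlinarith [hn1]
    clear_value δ M
    have hXpos : 0 < Real.pi * δ := mul_pos Real.pi_pos hδpos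
    have hmul6 : Real.pi * δ ≤ Real.pi * (1/6) := mul_le_mul_of_nonneg_left hδub Real.pi_pos.le
    have hX1 : Real.pi * δ ≤ 1 := by linarith
    have hXub : Real.pi * δ ≤ 0.525 := by linarith
    have hsin3 := Real.sin_gt_sub_cube hXpos
    have hX2 : (Real.pi*δ)^2 ≤ (0.525:ℝ)^2 := pow_le_pow_left₀ hXpos.le hXub 2
    have hcube' : (Real.pi*δ)^3 ≤ (Real.pi*δ) * (0.525:ℝ)^2 := by
      calc (Real.pi*δ)^3 = (Real.pi*δ) * (Real.pi*δ)^2 := by ring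
        _ ≤ (Real.pi*δ) * (0.525:ℝ)^2 := mul_le_mul_of_nonneg_left hX2 hXpos.le
    have hsinlb2 : (2.793:ℝ)/(2*(n:ℝ)+4) ≤ Real.sin (Real.pi*δ) := by
      have hstep : (2.793:ℝ)/(2*(n:ℝ)+4) ≤ (Real.pi*δ) * 0.931 := by
        calc (2.793:ℝ)/(2*(n:ℝ)+4) = (3/(2*(n:ℝ)+4))*0.931 := by ring
          _ ≤ (Real.pi*δ)*0.931 := mul_le_mul_of_nonneg_right hXlb (by norm_num)
      have h2c : (Real.pi*δ)*0.931 ≤ Real.pi*δ - (Real.pi*δ)^3/4 := by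
        linarith [hcube', hXpos.le]
      linarith [hsin3, pow_pos hXpos 3]
    have hfin : 1/M ≤ (2.793:ℝ)/(2*(n:ℝ)+4) := by
      rw [div_le_div_iff₀ hMpos (by positivity)]
      linarith [hMbig]
    have hsinlb : 1/M ≤ Real.sin (Real.pi * δ) := le_trans hfin hsinlb2
    by_contra hgt
    push_neg at hgt
    have hb1 : Real.pi * |u j| ≤ Real.pi * (1/2) := mul_le_mul_of_nonneg_left hd2 Real.pi_pos.le
    have hb2 : 0 ≤ Real.pi * |u j| := mul_nonneg Real.pi_pos.le (abs_nonneg _)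
    have hmono := Real.strictMonoOn_sin (a := Real.pi * δ) (b := Real.pi * |u j|)
      ⟨by linarith [hXpos], by linarith [hπ3]⟩
      ⟨by linarith, by linarith⟩
      (mul_lt_mul_of_pos_left hgt Real.pi_pos)
    have hlt : Real.sin (Real.pi * δ) < Real.sin (Real.pi * |u j|) := hmono
    linarith [hsinub, hsinlb]
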